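/- Let C₀ denote the operator system of all 2×2 complex matrices whose two diagonal entries are equal, with positivity inherited from M₂(ℂ). Then C₀ is not order isomorphic to any unital C*-algebra: for every unital complex C*-algebra B there is no complex-linear bijection φ : C₀ → B with φ(I) = 1_B such that φ maps positive elements of C₀ to positive elements of B and φ⁻¹ maps positive elements of B to positive elements of C₀. -/

import Mathlib

open scoped ComplexOrder

/-- The operator system `C₀` of all `2×2` complex matrices whose two diagonal entries
are equal, as a (complex) linear subspace of `M₂(ℂ)`. -/
noncomputable def C0 : Submodule ℂ (Matrix (Fin 2) (Fin 2) ℂ) where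
  carrier := {x | x 0 0 = x 1 1}
  zero_mem' := rfl
  add_mem' := by
    intro a b ha hb
    simp only [Set.mem_setOf_eq] at *
    simp [Matrix.add_apply, ha, hb]
  smul_mem' := by
    intro c a ha
    simp only [Set.mem_setOf_eq] at *
    simp [Matrix.smul_apply, ha]

theorem one_mem_C0 : (1 : Matrix (Fin 2) (Fin 2) ℂ) ∈ C0 := by
  show (1 : Matrix (Fin 2) (Fin 2) ℂ) 0 0 = (1 : Matrix (Fin 2) (Fin 2) ℂ) 1 1
  simp [Matrix.one_apply]

namespace Stmt19Aux

open Matrix Complex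

noncomputable def Pm : Matrix (Fin 2) (Fin 2) ℂ := !![1/2, 1/2; 1/2, 1/2]
noncomputable def Qm : Matrix (Fin 2) (Fin 2) ℂ := !![1/2, -(1/2); -(1/2), 1/2]
noncomputable def Rm : Matrix (Fin 2) (Fin 2) ℂ := !![1/2, -(I/2); I/2, 1/2]
noncomputable def Rm' : Matrix (Fin 2) (Fin 2) ℂ := !![1/2, I/2; -(I/2), 1/2]

lemma Pm_psd : Pm.PosSemidef := by
  suffices h : ∃ B : Matrix (Fin 2) (Fin 2) ℂ, Pm = Bᴴ * B by
    obtain ⟨B, hB⟩ := h; rw [hB]; exact posSemidef_conjTranspose_mul_self B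
  refine ⟨Pm, ?_⟩
  ext i j
  fin_cases i <;> fin_cases j <;>
    simp [Pm, Matrix.mul_apply, Fin.sum_univ_two, Matrix.conjTranspose_apply] <;> ring_nf <;>
    simp [Complex.ext_iff] <;> norm_num

lemma Qm_psd : Qm.PosSemidef := by
  suffices h : ∃ B : Matrix (Fin 2) (Fin 2) ℂ, Qm = Bᴴ * B by
    obtain ⟨B, hB⟩ := h; rw [hB]; exact posSemidef_conjTranspose_mul_self B
  refine ⟨Qm, ?_⟩
  ext i j
  fin_cases i <;> fin_cases j <;>
    simp [Qm, Matrix.mul_apply, Fin.sum_univ_two, Matrix.conjTranspose_apply] <;> ring_nf <;>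
    simp [Complex.ext_iff] <;> norm_num

lemma Rm_psd : Rm.PosSemidef := by
  suffices h : ∃ B : Matrix (Fin 2) (Fin 2) ℂ, Rm = Bᴴ * B by
    obtain ⟨B, hB⟩ := h; rw [hB]; exact posSemidef_conjTranspose_mul_self B
  refine ⟨Rm, ?_⟩
  ext i j
  fin_cases i <;> fin_cases j <;>
    simp [Rm, Matrix.mul_apply, Fin.sum_univ_two, Matrix.conjTranspose_apply] <;> ring_nf <;>
    simp [Complex.ext_iff] <;> norm_num

lemma Rm'_psd : Rm'.PosSemidef := by
  suffices h : ∃ B : Matrix (Fin 2) (Fin 2) ℂ, Rm' = Bᴴ * B by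
    obtain ⟨B, hB⟩ := h; rw [hB]; exact posSemidef_conjTranspose_mul_self B
  refine ⟨Rm', ?_⟩
  ext i j
  fin_cases i <;> fin_cases j <;>
    simp [Rm', Matrix.mul_apply, Fin.sum_univ_two, Matrix.conjTranspose_apply] <;> ring_nf <;>
    simp [Complex.ext_iff] <;> norm_num

lemma Pm_mem : Pm ∈ C0 := rfl
lemma Qm_mem : Qm ∈ C0 := rfl
lemma Rm_mem : Rm ∈ C0 := rfl
lemma Rm'_mem : Rm' ∈ C0 := rfl

lemma PQ_sum : Pm + Qm = 1 := by
  ext i j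
  fin_cases i <;> fin_cases j <;>
    simp [Pm, Qm, Matrix.one_apply] <;> norm_num

lemma RR'_sum : Rm + Rm' = 1 := by
  ext i j
  fin_cases i <;> fin_cases j <;>
    simp [Rm, Rm', Matrix.one_apply] <;> norm_num

lemma ker_of_dominated {A M : Matrix (Fin 2) (Fin 2) ℂ} (v : Fin 2 → ℂ)
    (hAv : A *ᵥ v = 0) (hM : M.PosSemidef) (hAM : (A - M).PosSemidef) :
    M *ᵥ v = 0 := by
  have h1 : (0:ℂ) ≤ star v ⬝ᵥ M *ᵥ v := hM.dotProduct_mulVec_nonneg v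
  have h2 : (0:ℂ) ≤ star v ⬝ᵥ (A - M) *ᵥ v := hAM.dotProduct_mulVec_nonneg v
  rw [Matrix.sub_mulVec, hAv, zero_sub, dotProduct_neg] at h2
  have h3 : star v ⬝ᵥ M *ᵥ v = 0 := le_antisymm (neg_nonneg.mp h2) h1
  exact (hM.dotProduct_mulVec_zero_iff v).mp h3

lemma face_gen {A M : Matrix (Fin 2) (Fin 2) ℂ} (v : Fin 2 → ℂ)
    (hAv : A *ᵥ v = 0) (hM : M.PosSemidef) (hAM : (A - M).PosSemidef) :
    (M 0 0 * v 0 + M 0 1 * v 1 = 0) ∧ (M 1 0 * v 0 + M 1 1 * v 1 = 0) := by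
  have hk := ker_of_dominated v hAv hM hAM
  constructor
  · have := congrFun hk 0
    simpa [Matrix.mulVec, dotProduct, Fin.sum_univ_two] using this
  · have := congrFun hk 1
    simpa [Matrix.mulVec, dotProduct, Fin.sum_univ_two] using this

lemma face_Pm {M : Matrix (Fin 2) (Fin 2) ℂ} (hmem : M 0 0 = M 1 1)
    (hM : M.PosSemidef) (hAM : (Pm - M).PosSemidef) : ∃ t : ℂ, M = t • Pm := by
  have hAv : Pm *ᵥ ![1, -1] = 0 := by
    funext i; fin_cases i <;>
      simp [Pm, Matrix.mulVec, dotProduct, Fin.sum_univ_two]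
  obtain ⟨e0, e1⟩ := face_gen ![1, -1] hAv hM hAM
  simp only [Matrix.cons_val_zero, Matrix.cons_val_one, Matrix.head_cons] at e0 e1
  refine ⟨2 * M 0 0, ?_⟩
  rw [← Matrix.ext_iff]
  simp only [Fin.forall_fin_two, Pm, Matrix.smul_apply, smul_eq_mul, Matrix.cons_val_zero,
    Matrix.cons_val_one, Matrix.head_cons, Matrix.of_apply, Matrix.cons_val', Matrix.empty_val',
    Matrix.cons_val_fin_one, Matrix.head_fin_const]
  refine ⟨⟨?_, ?_⟩, ?_, ?_⟩
  · ring
  · linear_combination -e0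
  · linear_combination e1 - hmem
  · linear_combination -hmem

lemma face_Qm {M : Matrix (Fin 2) (Fin 2) ℂ} (hmem : M 0 0 = M 1 1)
    (hM : M.PosSemidef) (hAM : (Qm - M).PosSemidef) : ∃ t : ℂ, M = t • Qm := by
  have hAv : Qm *ᵥ ![1, 1] = 0 := by
    funext i; fin_cases i <;>
      simp [Qm, Matrix.mulVec, dotProduct, Fin.sum_univ_two]
  obtain ⟨e0, e1⟩ := face_gen ![1, 1] hAv hM hAM
  simp only [Matrix.cons_val_zero, Matrix.cons_val_one, Matrix.head_cons] at e0 e1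
  refine ⟨2 * M 0 0, ?_⟩
  rw [← Matrix.ext_iff]
  simp only [Fin.forall_fin_two, Qm, Matrix.smul_apply, smul_eq_mul, Matrix.cons_val_zero,
    Matrix.cons_val_one, Matrix.head_cons, Matrix.of_apply, Matrix.cons_val', Matrix.empty_val',
    Matrix.cons_val_fin_one, Matrix.head_fin_const]
  refine ⟨⟨?_, ?_⟩, ?_, ?_⟩
  · ring
  · linear_combination e0
  · linear_combination e1 + hmem
  · linear_combination -hmem

lemma face_Rm {M : Matrix (Fin 2) (Fin 2) ℂ} (hmem : M 0 0 = M 1 1)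
    (hM : M.PosSemidef) (hAM : (Rm - M).PosSemidef) : ∃ t : ℂ, M = t • Rm := by
  have hAv : Rm *ᵥ ![I, 1] = 0 := by
    funext i; fin_cases i <;>
      simp [Rm, Matrix.mulVec, dotProduct, Fin.sum_univ_two] <;> ring_nf <;>
      simp [Complex.ext_iff]
  obtain ⟨e0, e1⟩ := face_gen ![I, 1] hAv hM hAM
  simp only [Matrix.cons_val_zero, Matrix.cons_val_one, Matrix.head_cons] at e0 e1
  refine ⟨2 * M 0 0, ?_⟩
  rw [← Matrix.ext_iff]
  simp only [Fin.forall_fin_two, Rm, Matrix.smul_apply, smul_eq_mul, Matrix.cons_val_zero,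
    Matrix.cons_val_one, Matrix.head_cons, Matrix.of_apply, Matrix.cons_val', Matrix.empty_val',
    Matrix.cons_val_fin_one, Matrix.head_fin_const]
  refine ⟨⟨?_, ?_⟩, ?_, ?_⟩
  · ring
  · linear_combination e0
  · linear_combination (-I) * e1 + (-I) * hmem + M 1 0 * Complex.I_sq
  · linear_combination -hmem
  
lemma face_Rm' {M : Matrix (Fin 2) (Fin 2) ℂ} (hmem : M 0 0 = M 1 1)
    (hM : M.PosSemidef) (hAM : (Rm' - M).PosSemidef) : ∃ t : ℂ, M = t • Rm' := by
  have hAv : Rm' *ᵥ ![-I, 1] = 0 := by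
    funext i; fin_cases i <;>
      simp [Rm', Matrix.mulVec, dotProduct, Fin.sum_univ_two] <;> ring_nf <;>
      simp [Complex.ext_iff]
  obtain ⟨e0, e1⟩ := face_gen ![-I, 1] hAv hM hAM
  simp only [Matrix.cons_val_zero, Matrix.cons_val_one, Matrix.head_cons] at e0 e1
  refine ⟨2 * M 0 0, ?_⟩
  rw [← Matrix.ext_iff]
  simp only [Fin.forall_fin_two, Rm', Matrix.smul_apply, smul_eq_mul, Matrix.cons_val_zero,
    Matrix.cons_val_one, Matrix.head_cons, Matrix.of_apply, Matrix.cons_val', Matrix.empty_val',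
    Matrix.cons_val_fin_one, Matrix.head_fin_const]
  refine ⟨⟨?_, ?_⟩, ?_, ?_⟩
  · ring
  · linear_combination e0
  · linear_combination I * e1 + I * hmem + M 1 0 * Complex.I_sq
  · linear_combination -hmem

end Stmt19Aux

section AuxCStar

variable {B : Type*} [NormedRing B] [StarRing B] [CStarRing B] [NormedAlgebra ℂ B]
    [CompleteSpace B] [StarModule ℂ B]

lemma isPos_star {a : B} (h : ∃ d : B, a = star d * d) : star a = a := by
  obtain ⟨d, rfl⟩ := h; simp [star_mul]

lemma isPos_conj {a : B} (c : B) (h : ∃ d : B, a = star d * d) :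
    ∃ d : B, star c * a * c = star d * d := by
  obtain ⟨d, rfl⟩ := h
  exact ⟨d * c, by simp [star_mul, mul_assoc]⟩

lemma exists_sa_sqrt (d : B) : ∃ s : B, star s = s ∧ s * s = star d * d := by
  letI : CStarAlgebra B := {}
  have hq : IsSelfAdjoint (star d * d) := IsSelfAdjoint.star_mul_self d
  refine ⟨cfc Real.sqrt (star d * d), (cfc_predicate Real.sqrt (star d * d) : IsSelfAdjoint _), ?_⟩
  rw [← cfc_mul Real.sqrt Real.sqrt (star d * d)]
  have : cfc (fun x => Real.sqrt x * Real.sqrt x) (star d * d) = cfc (id : ℝ → ℝ) (star d * d) := by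
    apply cfc_congr
    intro x hx
    exact Real.mul_self_sqrt (spectrum_star_mul_self_nonneg x hx)
  rw [this, cfc_id ℝ (star d * d)]

/-- If `p ≥ 0` and `1 - p ≥ 0` and the face of `p` (resp. of `1 - p`) in the positive
cone is the ray through `p` (resp. `1 - p`), and `1, p` are independent, then `p` is
idempotent. -/
lemma idem_of_faces (p : B)
    (hp : ∃ c : B, p = star c * c) (hq : ∃ c : B, 1 - p = star c * c)
    (Fp : ∀ b : B, (∃ c : B, b = star c * c) → (∃ c : B, p - b = star c * c) →
      ∃ t : ℂ, b = t • p)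
    (Fq : ∀ b : B, (∃ c : B, b = star c * c) → (∃ c : B, (1 - p) - b = star c * c) →
      ∃ t : ℂ, b = t • (1 - p))
    (indep2 : ∀ α β : ℂ, α • (1:B) + β • p = 0 → α = 0 ∧ β = 0) :
    p * p = p := by
  obtain ⟨d, hd⟩ := id hq
  obtain ⟨s, hs_sa, hs_sq⟩ := exists_sa_sqrt d
  rw [← hd] at hs_sq
  -- p - p*p = star s * p * s
  have key : p - p * p = star s * p * s := by
    rw [hs_sa]
    have hp' : p = 1 - s * s := by rw [hs_sq]; abel
    rw [hp']; noncomm_ring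
  have hkey : ∃ c : B, p - p * p = star c * c := by
    rw [key]; exact isPos_conj s hp
  -- also (1-p) - (1-p)*(1-p) = p - p * p
  have key2 : (1 - p) - (1 - p) * (1 - p) = p - p * p := by noncomm_ring
  obtain ⟨lam, hlam⟩ := Fp (p * p) ⟨p, by rw [isPos_star hp]⟩ hkey
  obtain ⟨mu, hmu⟩ := Fq ((1 - p) * (1 - p)) ⟨1 - p, by rw [isPos_star hq]⟩ (by rw [key2]; exact hkey)
  -- expand hmu
  have hexp : (1 - p) * (1 - p) = 1 - p - p + p * p := by noncomm_ring
  rw [hexp, hlam] at hmu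
  -- hmu : 1 - p - p + lam • p = mu • (1 - p)
  have hcomb : ((1:ℂ) - mu) • (1:B) + (lam - 2 + mu) • p = 0 := by
    have hmu' : (1:B) - p - p + lam • p = mu • (1:B) - mu • p := by
      rw [hmu, smul_sub]
    linear_combination (norm := module) hmu'
  obtain ⟨h1, h2⟩ := indep2 _ _ hcomb
  have hl1 : lam = 1 := by linear_combination h2 + h1
  rw [hl1, one_smul] at hlam
  exact hlam

theorem aux_no_iso (p r : B)
    (hp : ∃ c : B, p = star c * c) (hq : ∃ c : B, 1 - p = star c * c)
    (hr : ∃ c : B, r = star c * c) (hr' : ∃ c : B, 1 - r = star c * c)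
    (indep : ∀ α β γ : ℂ, α • (1:B) + β • p + γ • r = 0 → α = 0 ∧ β = 0 ∧ γ = 0)
    (span : ∀ b : B, ∃ α β γ : ℂ, b = α • (1:B) + β • p + γ • r)
    (Fp : ∀ b : B, (∃ c : B, b = star c * c) → (∃ c : B, p - b = star c * c) →
      ∃ t : ℂ, b = t • p)
    (Fq : ∀ b : B, (∃ c : B, b = star c * c) → (∃ c : B, (1 - p) - b = star c * c) →
      ∃ t : ℂ, b = t • (1 - p))
    (Fr : ∀ b : B, (∃ c : B, b = star c * c) → (∃ c : B, r - b = star c * c) →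
      ∃ t : ℂ, b = t • r)
    (Fr' : ∀ b : B, (∃ c : B, b = star c * c) → (∃ c : B, (1 - r) - b = star c * c) →
      ∃ t : ℂ, b = t • (1 - r)) :
    False := by
  have indep2 : ∀ α β : ℂ, α • (1:B) + β • p = 0 → α = 0 ∧ β = 0 := by
    intro α β h
    obtain ⟨h1, h2, _⟩ := indep α β 0 (by rw [zero_smul, add_zero, h])
    exact ⟨h1, h2⟩
  have indep2r : ∀ α γ : ℂ, α • (1:B) + γ • r = 0 → α = 0 ∧ γ = 0 := by
    intro α γ h
    obtain ⟨h1, _, h3⟩ := indep α 0 γ (by rw [zero_smul, add_zero, h])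
    exact ⟨h1, h3⟩
  -- p and r are idempotents
  have hP2 : p * p = p := idem_of_faces p hp hq Fp Fq indep2
  have hR2 : r * r = r := idem_of_faces r hr hr' Fr Fr' indep2r
  have sap : star p = p := isPos_star hp
  have sar : star r = r := isPos_star hr
  -- the scalars κ, τ
  have hprpPos : ∃ c : B, p * r * p = star c * c := by
    have := isPos_conj p hr
    rwa [sap] at this
  have hprpLe : ∃ c : B, p - p * r * p = star c * c := by
    have h1 := isPos_conj p hr'
    rw [sap] at h1
    have h2 : p * (1 - r) * p = p - p * r * p := by
      rw [mul_sub, mul_one, sub_mul, hP2]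
    rwa [h2] at h1
  obtain ⟨κ, hκ⟩ := Fp (p * r * p) hprpPos hprpLe
  have hrprPos : ∃ c : B, r * p * r = star c * c := by
    have := isPos_conj r hp
    rwa [sar] at this
  have hrprLe : ∃ c : B, r - r * p * r = star c * c := by
    have h1 := isPos_conj r hq
    rw [sar] at h1
    have h2 : r * (1 - p) * r = r - r * p * r := by
      rw [mul_sub, mul_one, sub_mul, hR2]
    rwa [h2] at h1
  obtain ⟨τ, hτ⟩ := Fr (r * p * r) hrprPos hrprLe
  -- expand p * r in the basis
  obtain ⟨α₀, β₀, γ₀, hspan⟩ := span (p * r)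
  by_cases hγ : γ₀ = 1
  · -- case γ₀ = 1
    subst hγ
    have h4 : (1 - p) * (p * r) = 0 := by
      rw [← mul_assoc, sub_mul, one_mul, hP2, sub_self, zero_mul]
    have h5 : (1 - p) * (p * r) = α₀ • (1 - p) + (1 - p) * r := by
      rw [hspan, one_smul]
      rw [mul_add, mul_add, mul_smul_comm, mul_smul_comm, mul_one]
      have : (1 - p) * p = 0 := by rw [sub_mul, one_mul, hP2, sub_self]
      rw [this, smul_zero, add_zero]
    have hqr : (1 - p) * r = (-α₀) • (1 - p) := by
      have := h4.symm.trans h5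
      -- 0 = α₀ • (1-p) + (1-p) * r
      linear_combination (norm := module) -this
    have hrq : r * (1 - p) = (-(starRingEnd ℂ) α₀) • (1 - p) := by
      have := congrArg star hqr
      rwa [star_mul, star_smul, star_sub, star_one, sap, sar] at this
    -- r * (1-p) * r two ways
    have e1 : r * ((1 - p) * r) = (α₀ * (starRingEnd ℂ) α₀) • (1 - p) := by
      rw [hqr, mul_smul_comm, hrq, smul_smul]
      ring_nf
    have e2 : r * ((1 - p) * r) = r - τ • r := by
      rw [← mul_assoc, mul_sub, mul_one, sub_mul, hR2, hτ]
    have hcomb : (α₀ * (starRingEnd ℂ) α₀) • (1:B) + (-(α₀ * (starRingEnd ℂ) α₀)) • p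
        + (τ - 1) • r = 0 := by
      have h := e1.symm.trans e2
      -- (α₀ conj α₀) • (1 - p) = r - τ • r
      have h' : (α₀ * (starRingEnd ℂ) α₀) • ((1:B) - p) = r - τ • r := h
      rw [smul_sub] at h'
      linear_combination (norm := module) h'
    obtain ⟨hA, _, hT⟩ := indep _ _ _ hcomb
    have hα₀ : α₀ = 0 := by
      rcases mul_eq_zero.mp hA with h | h
      · exact h
      · exact star_eq_zero.mp h
    have hτ1 : τ = 1 := by linear_combination hT
    -- now (1-p) * r = 0, hence r = p * r and r = r * p
    rw [hα₀, neg_zero, zero_smul] at hqr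
    rw [hα₀, map_zero, neg_zero, zero_smul] at hrq
    have hpr_r : p * r = r := by
      have : (1 - p) * r = r - p * r := by rw [sub_mul, one_mul]
      rw [this] at hqr
      linear_combination (norm := module) -hqr
    have hrp_r : r * p = r := by
      have : r * (1 - p) = r - r * p := by rw [mul_sub, mul_one]
      rw [this] at hrq
      linear_combination (norm := module) -hrq
    -- p * r * p = r, but also = κ • p
    have : r = κ • p := by
      rw [← hκ, hpr_r, hrp_r]
    have hcomb2 : (0:ℂ) • (1:B) + κ • p + (-1 : ℂ) • r = 0 := by
      rw [zero_smul, zero_add, ← this]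
      module
    obtain ⟨_, _, hbad⟩ := indep _ _ _ hcomb2
    norm_num at hbad
  · -- case γ₀ ≠ 1
    have h1 : p * (p * r) = p * r := by rw [← mul_assoc, hP2]
    have h2 : p * (p * r) = α₀ • p + β₀ • p + γ₀ • (p * r) := by
      conv_lhs => rw [hspan]
      rw [mul_add, mul_add, mul_smul_comm, mul_smul_comm, mul_smul_comm, mul_one, hP2]
    have h3 : ((1:ℂ) - γ₀) • (p * r) = (α₀ + β₀) • p := by
      have h := h2.symm.trans h1
      linear_combination (norm := module) -h
    have hne : (1:ℂ) - γ₀ ≠ 0 := sub_ne_zero.mpr fun h => hγ h.symm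
    set D : ℂ := ((1:ℂ) - γ₀)⁻¹ * (α₀ + β₀) with hDdef
    have hD : p * r = D • p := by
      have := congrArg (fun x => ((1:ℂ) - γ₀)⁻¹ • x) h3
      simp only [smul_smul] at this
      rwa [inv_mul_cancel₀ hne, one_smul] at this
    have hDrp : r * p = ((starRingEnd ℂ) D) • p := by
      have := congrArg star hD
      rwa [star_mul, star_smul, sap, sar] at this
    -- r * p * r = (D conj D) • p = τ • r
    have e1 : r * (p * r) = (D * (starRingEnd ℂ) D) • p := by
      rw [hD, mul_smul_comm, hDrp, smul_smul]
    have e2 : r * (p * r) = τ • r := by rw [← mul_assoc, hτ]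
    have hcomb : (0:ℂ) • (1:B) + (D * (starRingEnd ℂ) D) • p + (-τ) • r = 0 := by
      have h := e1.symm.trans e2
      linear_combination (norm := module) h
    obtain ⟨_, hDD, hT⟩ := indep _ _ _ hcomb
    have hD0 : D = 0 := by
      rcases mul_eq_zero.mp hDD with h | h
      · exact h
      · exact star_eq_zero.mp h
    rw [hD0, zero_smul] at hD
    rw [hD0, map_zero, zero_smul] at hDrp
    -- s₀ := 1 - p - r is a positive element below 1 - p, dominating r
    have hs₀ : ((1:B) - p - r) * ((1:B) - p - r) = (1:B) - p - r := by
      have expand : ((1:B) - p - r) * ((1:B) - p - r)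
          = 1 - p - p - r - r + p * p + p * r + r * p + r * r := by noncomm_ring
      rw [expand, hP2, hR2, hD, hDrp]
      abel
    have hs₀sa : star ((1:B) - p - r) = (1:B) - p - r := by
      rw [star_sub, star_sub, star_one, sap, sar]
    have hs₀Pos : ∃ c : B, (1:B) - p - r = star c * c :=
      ⟨(1:B) - p - r, by rw [hs₀sa, hs₀]⟩
    obtain ⟨t, ht⟩ := Fq r hr (by
      have : ((1:B) - p) - r = (1:B) - p - r := by abel
      rw [this]; exact hs₀Pos)
    -- r = t • (1 - p) contradicts independence
    have hcomb2 : t • (1:B) + (-t) • p + (-1 : ℂ) • r = 0 := by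
      rw [smul_sub] at ht
      linear_combination (norm := module) -ht
    obtain ⟨_, _, hbad⟩ := indep _ _ _ hcomb2
    norm_num at hbad

end AuxCStar


/-- The operator system `C₀` of `2×2` complex matrices with equal
diagonal entries (with positivity inherited from `M₂(ℂ)`) is not order isomorphic to any
unital C*-algebra: for every unital complex C*-algebra `B` there is no complex-linear
bijection `φ : C₀ → B` with `φ(I) = 1` mapping positive elements onto positive elements
in both directions (where positivity in `B` means being of the form `b*b`). -/
theorem stmt19 (B : Type*) [NormedRing B] [StarRing B] [CStarRing B] [NormedAlgebra ℂ B]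
    [CompleteSpace B] [StarModule ℂ B] :
    ¬ ∃ φ : C0 ≃ₗ[ℂ] B,
        φ ⟨1, one_mem_C0⟩ = 1 ∧
        (∀ x : C0, (x : Matrix (Fin 2) (Fin 2) ℂ).PosSemidef → ∃ c : B, φ x = star c * c) ∧
        (∀ x : C0, (∃ c : B, φ x = star c * c) → (x : Matrix (Fin 2) (Fin 2) ℂ).PosSemidef) := by
  rintro ⟨φ, hunit, hfwd, hbwd⟩
  open Stmt19Aux in
  let IC : C0 := ⟨1, one_mem_C0⟩
  let PC : C0 := ⟨Stmt19Aux.Pm, Stmt19Aux.Pm_mem⟩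
  let QC : C0 := ⟨Stmt19Aux.Qm, Stmt19Aux.Qm_mem⟩
  let RC : C0 := ⟨Stmt19Aux.Rm, Stmt19Aux.Rm_mem⟩
  let RC' : C0 := ⟨Stmt19Aux.Rm', Stmt19Aux.Rm'_mem⟩
  have hPQ : PC + QC = IC := Subtype.ext Stmt19Aux.PQ_sum
  have hRR' : RC + RC' = IC := Subtype.ext Stmt19Aux.RR'_sum
  set p : B := φ PC with hpdef
  set r : B := φ RC with hrdef
  have hunit' : φ IC = 1 := hunit
  have hq1 : φ QC = 1 - p := by
    rw [← hunit', ← hPQ, map_add]; abel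
  have hr'1 : φ RC' = 1 - r := by
    rw [← hunit', ← hRR', map_add]; abel
  have hpPos : ∃ c : B, p = star c * c := hfwd PC Stmt19Aux.Pm_psd
  have hqPos : ∃ c : B, 1 - p = star c * c := by
    rw [← hq1]; exact hfwd QC Stmt19Aux.Qm_psd
  have hrPos : ∃ c : B, r = star c * c := hfwd RC Stmt19Aux.Rm_psd
  have hr'Pos : ∃ c : B, 1 - r = star c * c := by
    rw [← hr'1]; exact hfwd RC' Stmt19Aux.Rm'_psd
  -- linear independence of 1, p, r
  have indep : ∀ α β γ : ℂ, α • (1:B) + β • p + γ • r = 0 → α = 0 ∧ β = 0 ∧ γ = 0 := by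
    intro α β γ h
    have h2 : φ (α • IC + β • PC + γ • RC) = 0 := by
      simp only [map_add, map_smul, hunit']
      exact h
    have h3 : α • IC + β • PC + γ • RC = 0 := by
      apply φ.injective
      rw [h2, map_zero]
    have h4 : α • (1 : Matrix (Fin 2) (Fin 2) ℂ) + β • Stmt19Aux.Pm + γ • Stmt19Aux.Rm = 0 := by
      have := congrArg Subtype.val h3
      simpa using this
    have e00 := congrFun (congrFun h4 0) 0
    have e01 := congrFun (congrFun h4 0) 1
    have e10 := congrFun (congrFun h4 1) 0
    simp only [Matrix.add_apply, Matrix.smul_apply, Matrix.one_apply, Stmt19Aux.Pm,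
      Stmt19Aux.Rm, smul_eq_mul, Matrix.zero_apply, Matrix.cons_val', Matrix.cons_val_zero,
      Matrix.cons_val_one, Matrix.head_cons, Matrix.empty_val', Matrix.cons_val_fin_one,
      Matrix.head_fin_const, Matrix.of_apply, if_true, if_false, Fin.isValue,
      one_ne_zero, zero_ne_one, reduceIte, mul_one, mul_zero, add_zero, zero_add] at e00 e01 e10
    have hg : γ * Complex.I = 0 := by linear_combination e10 - e01
    have hγ0 : γ = 0 := by
      rcases mul_eq_zero.mp hg with h | h
      · exact h
      · exact absurd h Complex.I_ne_zero
    have hβ0 : β = 0 := by linear_combination e01 + e10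
    have hα0 : α = 0 := by
      linear_combination e00 - (1/2 : ℂ) * hβ0 - (1/2 : ℂ) * hγ0
    exact ⟨hα0, hβ0, hγ0⟩
  -- 1, p, r span B
  have span : ∀ b : B, ∃ α β γ : ℂ, b = α • (1:B) + β • p + γ • r := by
    intro b
    set x : C0 := φ.symm b with hxdef
    have hX : (x : Matrix (Fin 2) (Fin 2) ℂ) 0 0 = (x : Matrix (Fin 2) (Fin 2) ℂ) 1 1 := x.2
    set X : Matrix (Fin 2) (Fin 2) ℂ := (x : Matrix (Fin 2) (Fin 2) ℂ) with hXdef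
    refine ⟨X 0 0 - (X 0 1 + X 1 0)/2 - Complex.I*(X 0 1 - X 1 0)/2,
      X 0 1 + X 1 0, Complex.I*(X 0 1 - X 1 0), ?_⟩
    have hx : x = (X 0 0 - (X 0 1 + X 1 0)/2 - Complex.I*(X 0 1 - X 1 0)/2) • IC
        + (X 0 1 + X 1 0) • PC + (Complex.I*(X 0 1 - X 1 0)) • RC := by
      apply Subtype.ext
      show X = _
      have hval : (((X 0 0 - (X 0 1 + X 1 0)/2 - Complex.I*(X 0 1 - X 1 0)/2) • IC
          + (X 0 1 + X 1 0) • PC + (Complex.I*(X 0 1 - X 1 0)) • RC : C0) : Matrix (Fin 2) (Fin 2) ℂ)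
          = (X 0 0 - (X 0 1 + X 1 0)/2 - Complex.I*(X 0 1 - X 1 0)/2) • (1 : Matrix (Fin 2) (Fin 2) ℂ)
          + (X 0 1 + X 1 0) • Stmt19Aux.Pm + (Complex.I*(X 0 1 - X 1 0)) • Stmt19Aux.Rm := by
        simp [IC, PC, RC]
      rw [hval]
      ext i j
      fin_cases i <;> fin_cases j <;>
        simp only [Matrix.add_apply, Matrix.smul_apply, Matrix.one_apply, Stmt19Aux.Pm,
          Stmt19Aux.Rm, smul_eq_mul, Matrix.cons_val', Matrix.cons_val_zero,
          Matrix.cons_val_one, Matrix.head_cons, Matrix.empty_val', Matrix.cons_val_fin_one,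
          Matrix.head_fin_const, Matrix.of_apply, Fin.isValue, one_ne_zero, zero_ne_one,
          reduceIte, mul_one, mul_zero, add_zero, zero_add, Fin.zero_eta, Fin.mk_one]
      · ring
      · linear_combination ((X 0 1 - X 1 0)/2) * Complex.I_sq
      · linear_combination (-(X 0 1 - X 1 0)/2) * Complex.I_sq
      · linear_combination -hX
    calc b = φ x := (φ.apply_symm_apply b).symm
      _ = _ := by rw [hx]; simp only [map_add, map_smul, hunit']; rfl
  -- face conditions
  have Fp : ∀ b : B, (∃ c : B, b = star c * c) → (∃ c : B, p - b = star c * c) →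
      ∃ t : ℂ, b = t • p := by
    intro b hb hpb
    have hφw : φ (φ.symm b) = b := φ.apply_symm_apply b
    have hW : ((φ.symm b : C0) : Matrix (Fin 2) (Fin 2) ℂ).PosSemidef :=
      hbwd _ (by rw [hφw]; exact hb)
    have hPW : (Stmt19Aux.Pm - ((φ.symm b : C0) : Matrix (Fin 2) (Fin 2) ℂ)).PosSemidef := by
      have := hbwd (PC - φ.symm b) (by rw [map_sub, hφw]; exact hpb)
      simpa using this
    obtain ⟨t, ht⟩ := Stmt19Aux.face_Pm (φ.symm b).2 hW hPW
    refine ⟨t, ?_⟩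
    rw [← hφw, show (φ.symm b : C0) = t • PC from Subtype.ext ht, map_smul]
  have Fq : ∀ b : B, (∃ c : B, b = star c * c) → (∃ c : B, (1 - p) - b = star c * c) →
      ∃ t : ℂ, b = t • (1 - p) := by
    intro b hb hpb
    have hφw : φ (φ.symm b) = b := φ.apply_symm_apply b
    have hW : ((φ.symm b : C0) : Matrix (Fin 2) (Fin 2) ℂ).PosSemidef :=
      hbwd _ (by rw [hφw]; exact hb)
    have hPW : (Stmt19Aux.Qm - ((φ.symm b : C0) : Matrix (Fin 2) (Fin 2) ℂ)).PosSemidef := by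
      have := hbwd (QC - φ.symm b) (by rw [map_sub, hφw, hq1]; exact hpb)
      simpa using this
    obtain ⟨t, ht⟩ := Stmt19Aux.face_Qm (φ.symm b).2 hW hPW
    refine ⟨t, ?_⟩
    rw [← hφw, show (φ.symm b : C0) = t • QC from Subtype.ext ht, map_smul, hq1]
  have Fr : ∀ b : B, (∃ c : B, b = star c * c) → (∃ c : B, r - b = star c * c) →
      ∃ t : ℂ, b = t • r := by
    intro b hb hpb
    have hφw : φ (φ.symm b) = b := φ.apply_symm_apply b
    have hW : ((φ.symm b : C0) : Matrix (Fin 2) (Fin 2) ℂ).PosSemidef :=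
      hbwd _ (by rw [hφw]; exact hb)
    have hPW : (Stmt19Aux.Rm - ((φ.symm b : C0) : Matrix (Fin 2) (Fin 2) ℂ)).PosSemidef := by
      have := hbwd (RC - φ.symm b) (by rw [map_sub, hφw]; exact hpb)
      simpa using this
    obtain ⟨t, ht⟩ := Stmt19Aux.face_Rm (φ.symm b).2 hW hPW
    refine ⟨t, ?_⟩
    rw [← hφw, show (φ.symm b : C0) = t • RC from Subtype.ext ht, map_smul]
  have Fr' : ∀ b : B, (∃ c : B, b = star c * c) → (∃ c : B, (1 - r) - b = star c * c) →
      ∃ t : ℂ, b = t • (1 - r) := by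
    intro b hb hpb
    have hφw : φ (φ.symm b) = b := φ.apply_symm_apply b
    have hW : ((φ.symm b : C0) : Matrix (Fin 2) (Fin 2) ℂ).PosSemidef :=
      hbwd _ (by rw [hφw]; exact hb)
    have hPW : (Stmt19Aux.Rm' - ((φ.symm b : C0) : Matrix (Fin 2) (Fin 2) ℂ)).PosSemidef := by
      have := hbwd (RC' - φ.symm b) (by rw [map_sub, hφw, hr'1]; exact hpb)
      simpa using this
    obtain ⟨t, ht⟩ := Stmt19Aux.face_Rm' (φ.symm b).2 hW hPW
    refine ⟨t, ?_⟩
    rw [← hφw, show (φ.symm b : C0) = t • RC' from Subtype.ext ht, map_smul, hr'1]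
  exact aux_no_iso p r hpPos hqPos hrPos hr'Pos indep span Fp Fq Fr Fr'
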